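/- arXiv:2510.06722 — 3 statements merged into one kernel-verified Lean document; each statement's English description precedes it below -/
import Mathlib

section
/- The two expressions for the eigenvalue polynomial agree: ∑_{j=0}^{k} (-1)^{k-j}·binom(r-j, k-j)·binom(r-i, j)·binom(n-r+j-i, j) = ∑_{j=0}^{k} (-1)^{j}·binom(i,j)·binom(r-i, k-j)·binom(n-r-i, k-j), for all natural numbers n, r, i, k with r ≤ n/2, i ≤ r and k ≤ r. -/
open Finset

/-- ∑ (-1)^m C(A,m) C(A+i-m, K-m) = C(i,K) -/
lemma inner_alt (A : ℕ) : ∀ i K : ℕ,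
    ∑ m ∈ Finset.range (K + 1),
      (-1 : ℤ) ^ m * (Nat.choose A m) * (Nat.choose (A + i - m) (K - m)) =
    (Nat.choose i K : ℤ) := by
  induction A with
  | zero =>
    intro i K
    rw [Finset.sum_eq_single 0]
    · simp
    · intro m hm hm0
      have : Nat.choose 0 m = 0 := Nat.choose_eq_zero_of_lt (Nat.pos_of_ne_zero hm0)
      simp [this]
    · simp
  | succ A IH =>
    intro i K
    cases K with
    | zero => simp
    | succ K =>
      have h1 := IH (i + 1) (K + 1)
      have h2 := IH i K
      rw [Finset.sum_range_succ'] at h1 ⊢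
      have e1 : ∀ m : ℕ, A + 1 + i - (m + 1) = A + i - m := by intro m; omega
      have e2 : ∀ m : ℕ, K + 1 - (m + 1) = K - m := by intro m; omega
      have e3 : ∀ m : ℕ, A + (i + 1) - (m + 1) = A + i - m := by intro m; omega
      simp only [e1, e2, e3, Nat.choose_succ_succ (A) _, Nat.sub_zero, Nat.choose_zero_right] at h1 ⊢
      push_cast at h1 ⊢
      have split : ∑ m ∈ Finset.range (K + 1),
          (-1 : ℤ) ^ (m + 1) * ((Nat.choose A m : ℤ) + (Nat.choose A (m+1) : ℤ)) *
            (Nat.choose (A + i - m) (K - m)) =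
          (∑ m ∈ Finset.range (K + 1), (-1 : ℤ) ^ (m + 1) * (Nat.choose A m) *
            (Nat.choose (A + i - m) (K - m))) +
          (∑ m ∈ Finset.range (K + 1), (-1 : ℤ) ^ (m + 1) * (Nat.choose A (m+1)) *
            (Nat.choose (A + i - m) (K - m))) := by
        rw [← Finset.sum_add_distrib]
        apply Finset.sum_congr rfl
        intro m _
        ring
      have neg2 : ∑ m ∈ Finset.range (K + 1), (-1 : ℤ) ^ (m + 1) * (Nat.choose A m) *
            (Nat.choose (A + i - m) (K - m)) = -(Nat.choose i K : ℤ) := by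
        rw [← h2, ← Finset.sum_neg_distrib]
        apply Finset.sum_congr rfl
        intro m _
        ring
      have e4 : A + 1 + i = A + (i + 1) := by omega
      have pasc : (((i+1).choose (K+1) : ℕ) : ℤ) = (i.choose K : ℤ) + (i.choose (K+1) : ℤ) := by
        rw [Nat.choose_succ_succ]; push_cast; ring
      rw [e4, show Nat.succ = (· + 1) from rfl, split, neg2]
      linarith [h1, pasc]

lemma inner_flip (A i K : ℕ) :
    ∑ m ∈ Finset.range (K + 1),
      (-1 : ℤ) ^ (K - m) * (Nat.choose A m) * (Nat.choose (A + i - m) (K - m)) =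
    (-1 : ℤ) ^ K * (Nat.choose i K) := by
  rw [← inner_alt A i K, Finset.mul_sum]
  apply Finset.sum_congr rfl
  intro m hm
  have hm' : m ≤ K := by
    have := Finset.mem_range.mp hm; omega
  have h : (-1 : ℤ) ^ K = (-1) ^ (K - m) * (-1) ^ m := by
    rw [← pow_add, Nat.sub_add_cancel hm']
  have sq : (-1 : ℤ) ^ (m * 2) = 1 := by
    rw [mul_comm, pow_mul]; norm_num
  rw [h]
  linear_combination (-(1:ℤ) * (-1 : ℤ) ^ (K - m) * (Nat.choose A m : ℤ) *
    (Nat.choose (A + i - m) (K - m) : ℤ)) * sq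

lemma vander (b j : ℕ) :
    (b + j).choose j = ∑ t ∈ Finset.range (j + 1), b.choose t * j.choose t := by
  rw [Nat.add_choose_eq, Finset.Nat.sum_antidiagonal_eq_sum_range_succ_mk]
  apply Finset.sum_congr rfl
  intro t ht
  have ht' : t ≤ j := by have := Finset.mem_range.mp ht; omega
  rw [Nat.choose_symm ht']

lemma tri (a t m : ℕ) :
    a.choose (t + m) * (t + m).choose t = a.choose t * (a - t).choose m := by
  by_cases h : t + m ≤ a
  · have := Nat.choose_mul (n := a) (Nat.le_add_right t m)
    rwa [Nat.add_sub_cancel_left] at this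
  · push_neg at h
    rw [Nat.choose_eq_zero_of_lt h, Nat.zero_mul]
    by_cases ht : t ≤ a
    · rw [Nat.choose_eq_zero_of_lt (show a - t < m by omega), Nat.mul_zero]
    · rw [Nat.choose_eq_zero_of_lt (by omega), Nat.zero_mul]

theorem stmt1 (n r i k : ℕ) (hr : r ≤ n / 2) (hir : i ≤ r) (hkr : k ≤ r) :
    ∑ j ∈ Finset.range (k + 1),
        (-1 : ℤ) ^ (k - j) * (Nat.choose (r - j) (k - j)) * (Nat.choose (r - i) j) *
          (Nat.choose (n - r + j - i) j) =
      ∑ j ∈ Finset.range (k + 1),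
        (-1 : ℤ) ^ j * (Nat.choose i j) * (Nat.choose (r - i) (k - j)) *
          (Nat.choose (n - r - i) (k - j)) := by
  have hn : 2 * r ≤ n := by
    have := (Nat.le_div_iff_mul_le (by norm_num : 0 < 2)).mp hr
    omega
  calc
    ∑ j ∈ Finset.range (k + 1),
        (-1 : ℤ) ^ (k - j) * (Nat.choose (r - j) (k - j)) * (Nat.choose (r - i) j) *
          (Nat.choose (n - r + j - i) j)
        = ∑ j ∈ Finset.range (k + 1), ∑ t ∈ Finset.range (j + 1),
            (-1 : ℤ) ^ (k - j) * (Nat.choose (r - j) (k - j)) * (Nat.choose (r - i) j) *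
              ((Nat.choose (n - r - i) t : ℤ) * (Nat.choose j t : ℤ)) := by
      apply Finset.sum_congr rfl
      intro j hj
      have e : n - r + j - i = (n - r - i) + j := by omega
      rw [e, vander (n - r - i) j]
      push_cast
      rw [Finset.mul_sum]
    _ = ∑ t ∈ Finset.range (k + 1), ∑ j ∈ Finset.Ico t (k + 1),
            (-1 : ℤ) ^ (k - j) * (Nat.choose (r - j) (k - j)) * (Nat.choose (r - i) j) *
              ((Nat.choose (n - r - i) t : ℤ) * (Nat.choose j t : ℤ)) := by
      have h := Finset.sum_Ico_Ico_comm 0 (k + 1)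
        (fun t j => (-1 : ℤ) ^ (k - j) * (Nat.choose (r - j) (k - j)) * (Nat.choose (r - i) j) *
              ((Nat.choose (n - r - i) t : ℤ) * (Nat.choose j t : ℤ)))
      simp only [← Finset.range_eq_Ico] at h
      exact h.symm
    _ = ∑ t ∈ Finset.range (k + 1),
            (-1 : ℤ) ^ (k - t) * (Nat.choose i (k - t)) * (Nat.choose (r - i) t) *
              (Nat.choose (n - r - i) t) := by
      apply Finset.sum_congr rfl
      intro t ht
      have ht' : t ≤ k := by have := Finset.mem_range.mp ht; omega
      rw [Finset.sum_Ico_eq_sum_range]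
      have hkt : k + 1 - t = (k - t) + 1 := by omega
      rw [hkt]
      by_cases ha : t ≤ r - i
      · have step : ∑ m ∈ Finset.range ((k - t) + 1),
            (-1 : ℤ) ^ (k - (t + m)) * (Nat.choose (r - (t + m)) (k - (t + m))) *
              (Nat.choose (r - i) (t + m)) *
              ((Nat.choose (n - r - i) t : ℤ) * (Nat.choose (t + m) t : ℤ)) =
            ((Nat.choose (r - i) t : ℤ) * (Nat.choose (n - r - i) t : ℤ)) *
              ∑ m ∈ Finset.range ((k - t) + 1),
                (-1 : ℤ) ^ ((k - t) - m) * (Nat.choose (r - i - t) m) *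
                  (Nat.choose ((r - i - t) + i - m) ((k - t) - m)) := by
          rw [Finset.mul_sum]
          apply Finset.sum_congr rfl
          intro m hm
          have e5 : k - (t + m) = (k - t) - m := by omega
          have e6 : r - (t + m) = (r - i - t) + i - m := by omega
          have tc : ((r - i).choose (t + m) : ℤ) * ((t + m).choose t : ℤ) =
              ((r - i).choose t : ℤ) * ((r - i - t).choose m : ℤ) := by
            exact_mod_cast congrArg (Nat.cast : ℕ → ℤ) (tri (r - i) t m)
          rw [e5, e6]
          linear_combination ((-1 : ℤ) ^ ((k - t) - m) *
            (Nat.choose ((r - i - t) + i - m) ((k - t) - m) : ℤ) *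
            (Nat.choose (n - r - i) t : ℤ)) * tc
        rw [step, inner_flip (r - i - t) i (k - t)]
        ring
      · push_neg at ha
        rw [Finset.sum_eq_zero, Nat.choose_eq_zero_of_lt ha]
        · push_cast; ring
        · intro m _
          rw [Nat.choose_eq_zero_of_lt (show r - i < t + m by omega)]
          push_cast; ring
    _ = ∑ j ∈ Finset.range (k + 1),
        (-1 : ℤ) ^ j * (Nat.choose i j) * (Nat.choose (r - i) (k - j)) *
          (Nat.choose (n - r - i) (k - j)) := by
      rw [← Finset.sum_range_reflect]
      apply Finset.sum_congr rfl
      intro j hj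
      have hj' : j ≤ k := by have := Finset.mem_range.mp hj; omega
      have e7 : k + 1 - 1 - j = k - j := by omega
      have e8 : k - (k - j) = j := by omega
      rw [e7, e8]
end

section
/- In the Johnson graph G(n,r,s), the first-level eigenvalue satisfies E_{r-s}(1) = ((sn - r²)/(r(n-r)))·binom(r,s)·binom(n-r,r-s), i.e. r(n-r)·E_{r-s}(1) = (sn - r²)·binom(r,s)·binom(n-r,r-s), where E_k(i) = ∑_{j=0}^{k} (-1)^j·binom(i,j)·binom(r-i,k-j)·binom(n-r-i,k-j). -/
/-- The eigenvalue sum E_k(i) for the Johnson graph G(n,r,s). -/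
def johnsonE (n r k i : ℕ) : ℤ :=
  ∑ j ∈ Finset.range (k + 1),
    (-1 : ℤ) ^ j * (Nat.choose i j) * (Nat.choose (r - i) (k - j)) *
      (Nat.choose (n - r - i) (k - j))

lemma mul_choose_pred (m t : ℕ) (hm : 1 ≤ m) (ht : 1 ≤ t) :
    (m : ℤ) * Nat.choose (m - 1) (t - 1) = (t : ℤ) * Nat.choose m t := by
  obtain ⟨m, rfl⟩ := Nat.exists_eq_add_of_le hm
  obtain ⟨t, rfl⟩ := Nat.exists_eq_add_of_le ht
  simp only [Nat.add_sub_cancel_left, Nat.add_comm 1]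
  simp only [Nat.add_sub_cancel]
  have := Nat.add_one_mul_choose_eq m t
  push_cast at this ⊢
  linarith

lemma mul_choose_pred' (m t : ℕ) (hm : 1 ≤ m) (ht : 1 ≤ t) :
    (m : ℤ) * Nat.choose (m - 1) t = ((m : ℤ) - t) * Nat.choose m t := by
  have hp : Nat.choose m t = Nat.choose (m - 1) t + Nat.choose (m - 1) (t - 1) := by
    obtain ⟨m, rfl⟩ := Nat.exists_eq_add_of_le hm
    obtain ⟨t, rfl⟩ := Nat.exists_eq_add_of_le ht
    simp [Nat.add_comm 1, Nat.choose_succ_succ]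
    omega
  have h1 := mul_choose_pred m t hm ht
  have : ((Nat.choose m t : ℤ)) = Nat.choose (m - 1) t + Nat.choose (m - 1) (t - 1) := by
    exact_mod_cast hp
  linear_combination -h1 - (m : ℤ) * this

theorem stmt14 (n r s : ℕ) (hs1 : 1 ≤ s) (hsr : s < r) (hrn : 2 * r ≤ n) :
    (r : ℤ) * ((n : ℤ) - r) * johnsonE n r (r - s) 1 =
      ((s : ℤ) * n - (r : ℤ) ^ 2) * (Nat.choose r s) * (Nat.choose (n - r) (r - s)) := by
  set k := r - s with hk
  have hk1 : 1 ≤ k := by omega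
  have hr1 : 1 ≤ r := by omega
  have hnr1 : 1 ≤ n - r := by omega
  have hE : johnsonE n r k 1 =
      (Nat.choose (r - 1) k : ℤ) * Nat.choose (n - r - 1) k -
        (Nat.choose (r - 1) (k - 1) : ℤ) * Nat.choose (n - r - 1) (k - 1) := by
    rw [johnsonE]
    rw [← Finset.sum_subset (Finset.range_subset_range.2 (by omega : 2 ≤ k + 1))]
    · rw [Finset.sum_range_succ, Finset.sum_range_succ, Finset.sum_range_zero]
      simp
      ring
    · intro x hx hx2
      have : 1 < x := by simp at hx2; omega
      simp [Nat.choose_eq_zero_of_lt this]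
  rw [hE]
  have h1 := mul_choose_pred r k hr1 hk1
  have h2 := mul_choose_pred' r k hr1 hk1
  have h3 := mul_choose_pred (n - r) k hnr1 hk1
  have h4 := mul_choose_pred' (n - r) k hnr1 hk1
  have hcast : ((n - r : ℕ) : ℤ) = (n : ℤ) - r := by
    have : r ≤ n := by omega
    push_cast [this]; ring
  rw [hcast] at h3 h4
  have hrs : Nat.choose r s = Nat.choose r k := by
    rw [hk, ← Nat.choose_symm (le_of_lt hsr)]
  have hks : (k : ℤ) = (r : ℤ) - s := by
    have : s ≤ r := le_of_lt hsr
    push_cast [hk, this]; ring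
  rw [hrs]
  have key : (r : ℤ) * ((n : ℤ) - r) *
      ((Nat.choose (r - 1) k : ℤ) * Nat.choose (n - r - 1) k -
        (Nat.choose (r - 1) (k - 1) : ℤ) * Nat.choose (n - r - 1) (k - 1)) =
      (((r : ℤ) - k) * Nat.choose r k) * ((((n : ℤ) - r) - k) * Nat.choose (n - r) k) -
      ((k : ℤ) * Nat.choose r k) * ((k : ℤ) * Nat.choose (n - r) k) := by
    rw [← h1, ← h2, ← h3, ← h4]; ring
  rw [key, hks]
  ring
end

section
/- Let C(i,j) = binom(i,j)·binom(r-i, r-s-j)·binom(n-r-i, r-s-j) and E_{r-s}(i) = ∑_{j=0}^{i} (-1)^j C(i,j). Then for 1 ≤ i ≤ r-s, the telescoping identity (r-i+1)(n-r-i+1)·E_{r-s}(i) = ∑_{j=0}^{i-1} (-1)^j·[(s-i+j+1)(n-2r+s+j-i+1) - (r-s-j)²]·C(i-1,j) holds. -/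
/-- C(i,j) = binom(i,j)·binom(r-i, r-s-j)·binom(n-r-i, r-s-j), as an integer. -/
def johnsonC (n r s i j : ℕ) : ℤ :=
  (Nat.choose i j : ℤ) * (Nat.choose (r - i) (r - s - j)) * (Nat.choose (n - r - i) (r - s - j))

private lemma habs1 (m k : ℕ) :
    ((m : ℤ) + 1) * (Nat.choose m k : ℤ) = ((m : ℤ) + 1 - k) * (Nat.choose (m + 1) k : ℤ) := by
  rcases le_or_gt k (m + 1) with h | h
  · have h0 := Nat.choose_mul_succ_eq m k
    have h1 : ((Nat.choose m k * (m + 1) : ℕ) : ℤ)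
        = ((Nat.choose (m + 1) k * (m + 1 - k) : ℕ) : ℤ) := congrArg (Nat.cast : ℕ → ℤ) h0
    push_cast [Nat.cast_sub h] at h1
    linarith
  · rw [Nat.choose_eq_zero_of_lt (by omega), Nat.choose_eq_zero_of_lt h]
    ring

private lemma habs2 (m k : ℕ) :
    ((k : ℤ) + 1) * (Nat.choose m (k + 1) : ℤ) = ((m : ℤ) - k) * (Nat.choose m k : ℤ) := by
  rcases le_or_gt k m with h | h
  · have h0 := Nat.choose_succ_right_eq m k
    have h1 : ((Nat.choose m (k + 1) * (k + 1) : ℕ) : ℤ)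
        = ((Nat.choose m k * (m - k) : ℕ) : ℤ) := congrArg (Nat.cast : ℕ → ℤ) h0
    push_cast [Nat.cast_sub h] at h1
    linarith
  · rw [Nat.choose_eq_zero_of_lt (by omega), Nat.choose_eq_zero_of_lt h]
    ring

private lemma pascal_sum (m : ℕ) (G : ℕ → ℤ) :
    ∑ j ∈ Finset.range (m + 2), (-1 : ℤ) ^ j * (Nat.choose (m + 1) j : ℤ) * G j
      = ∑ j ∈ Finset.range (m + 1), (-1 : ℤ) ^ j * (Nat.choose m j : ℤ) * G j
        - ∑ j ∈ Finset.range (m + 1), (-1 : ℤ) ^ j * (Nat.choose m j : ℤ) * G (j + 1) := by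
  rw [Finset.sum_range_succ'
      (fun j => (-1 : ℤ) ^ j * (Nat.choose (m + 1) j : ℤ) * G j) (m + 1)]
  have hsplit : ∀ j : ℕ,
      (-1 : ℤ) ^ (j + 1) * (Nat.choose (m + 1) (j + 1) : ℤ) * G (j + 1)
        = -((-1 : ℤ) ^ j * (Nat.choose m j : ℤ) * G (j + 1))
          + (-1 : ℤ) ^ (j + 1) * (Nat.choose m (j + 1) : ℤ) * G (j + 1) := by
    intro j
    rw [Nat.choose_succ_succ']
    push_cast
    ring
  rw [Finset.sum_congr rfl (fun j _ => hsplit j), Finset.sum_add_distrib]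
  have hshift : ∑ j ∈ Finset.range (m + 1),
      (-1 : ℤ) ^ (j + 1) * (Nat.choose m (j + 1) : ℤ) * G (j + 1)
        = ∑ j ∈ Finset.range (m + 1), (-1 : ℤ) ^ j * (Nat.choose m j : ℤ) * G j
          - (-1 : ℤ) ^ 0 * (Nat.choose m 0 : ℤ) * G 0 := by
    have h1 := Finset.sum_range_succ'
      (fun j => (-1 : ℤ) ^ j * (Nat.choose m j : ℤ) * G j) (m + 1)
    have h2 := Finset.sum_range_succ
      (fun j => (-1 : ℤ) ^ j * (Nat.choose m j : ℤ) * G j) (m + 1)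
    rw [Nat.choose_eq_zero_of_lt (by omega)] at h2
    push_cast at h2
    linarith
  rw [hshift]
  simp [Finset.sum_neg_distrib]
  ring

theorem stmt16 (n r s i : ℕ) (hsr : s < r) (hrn : 2 * r ≤ n) (hi1 : 1 ≤ i)
    (hirs : i ≤ r - s) :
    ((r : ℤ) - i + 1) * ((n : ℤ) - r - i + 1) *
        (∑ j ∈ Finset.range (i + 1), (-1 : ℤ) ^ j * johnsonC n r s i j) =
      ∑ j ∈ Finset.range i, (-1 : ℤ) ^ j *
        (((s : ℤ) - i + j + 1) * ((n : ℤ) - 2 * r + s + j - i + 1) -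
          ((r : ℤ) - s - j) ^ 2) * johnsonC n r s (i - 1) j := by
  obtain ⟨m, rfl⟩ : ∃ m, i = m + 1 := ⟨i - 1, by omega⟩
  have hmr : m + 1 ≤ r - s := hirs
  have hirle : m + 1 ≤ r := by omega
  have hinr : m + 1 ≤ n - r := by omega
  -- abbreviations
  set A : ℕ → ℤ := fun j => ((s : ℤ) - m + j) * ((n : ℤ) - 2 * r + s + j - m) with hA
  set D : ℕ → ℤ := fun j =>
    (Nat.choose (r - m) (r - s - j) : ℤ) * (Nat.choose (n - r - m) (r - s - j) : ℤ) with hD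
  -- Step 1: absorb the prefactor termwise
  have step1 : ((r : ℤ) - (m + 1) + 1) * ((n : ℤ) - r - (m + 1) + 1) *
      (∑ j ∈ Finset.range (m + 1 + 1), (-1 : ℤ) ^ j * johnsonC n r s (m + 1) j)
      = ∑ j ∈ Finset.range (m + 2),
          (-1 : ℤ) ^ j * (Nat.choose (m + 1) j : ℤ) * (A j * D j) := by
    rw [Finset.mul_sum]
    refine Finset.sum_congr rfl fun j hj => ?_
    have hji : j ≤ m + 1 := by
      simp only [Finset.mem_range] at hj; omega
    have hjrs : j ≤ r - s := le_trans hji hmr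
    have e1 := habs1 (r - (m + 1)) (r - s - j)
    have e2 := habs1 (n - r - (m + 1)) (r - s - j)
    have c1 : ((r - (m + 1) : ℕ) : ℤ) = (r : ℤ) - m - 1 := by omega
    have c2 : ((n - r - (m + 1) : ℕ) : ℤ) = (n : ℤ) - r - m - 1 := by omega
    have c3 : ((r - s - j : ℕ) : ℤ) = (r : ℤ) - s - j := by omega
    have d1 : r - (m + 1) + 1 = r - m := by omega
    have d2 : n - r - (m + 1) + 1 = n - r - m := by omega
    rw [c1, c3, d1] at e1
    rw [c2, c3, d2] at e2
    simp only [johnsonC, hA, hD]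
    linear_combination
      ((-1 : ℤ) ^ j * (Nat.choose (m + 1) j : ℤ) * ((n : ℤ) - r - m) *
          (Nat.choose (n - r - (m + 1)) (r - s - j) : ℤ)) * e1 +
      ((-1 : ℤ) ^ j * (Nat.choose (m + 1) j : ℤ) * ((s : ℤ) - m + j) *
          (Nat.choose (r - m) (r - s - j) : ℤ)) * e2
  -- Step 3 ingredient: termwise telescoping identity
  have step3 : ∀ j, j ≤ m → A (j + 1) * D (j + 1) = ((r : ℤ) - s - j) ^ 2 * D j := by
    intro j hj
    have hjrs : j + 1 ≤ r - s := by omega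
    have e1 := habs2 (r - m) (r - s - j - 1)
    have e2 := habs2 (n - r - m) (r - s - j - 1)
    have c1 : ((r - m : ℕ) : ℤ) = (r : ℤ) - m := by omega
    have c2 : ((n - r - m : ℕ) : ℤ) = (n : ℤ) - r - m := by omega
    have c3 : ((r - s - j - 1 : ℕ) : ℤ) = (r : ℤ) - s - j - 1 := by omega
    have d1 : r - s - j - 1 + 1 = r - s - j := by omega
    have d2 : r - s - (j + 1) = r - s - j - 1 := by omega
    rw [c1, c3, d1] at e1
    rw [c2, c3, d1] at e2
    simp only [hA, hD, d2]
    push_cast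
    linear_combination
      (-(((r : ℤ) - s - j) * (Nat.choose (n - r - m) (r - s - j) : ℤ))) * e1 +
      (-(((s : ℤ) - m + j + 1) * (Nat.choose (r - m) (r - s - j - 1) : ℤ))) * e2
  have ps := pascal_sum m (fun j => A j * D j)
  push_cast
  rw [step1, ps, ← Finset.sum_sub_distrib]
  refine Finset.sum_congr rfl fun j hj => ?_
  have hjm : j ≤ m := by simp only [Finset.mem_range] at hj; omega
  have hC : johnsonC n r s m j = (Nat.choose m j : ℤ) * D j := by
    simp only [johnsonC, hD]
    ring
  rw [hC]
  have hAeq : ((s : ℤ) - (m + 1) + j + 1) * ((n : ℤ) - 2 * r + s + j - (m + 1) + 1) = A j := by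
    simp only [hA]; push_cast; ring
  rw [show ((-1 : ℤ) ^ j * (Nat.choose m j : ℤ) * (A j * D j)
      - (-1 : ℤ) ^ j * (Nat.choose m j : ℤ) * (A (j + 1) * D (j + 1)))
      = (-1 : ℤ) ^ j * (Nat.choose m j : ℤ) * (A j * D j - A (j + 1) * D (j + 1)) from by ring,
    step3 j hjm]
  push_cast
  ring
end
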